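/- Let a(s) = s² + a₁s + a₂ with a₁, a₂ > 0 and c(s) = s + x₁ with 0 < x₁ < a₁. Then c(s)/( a(s)) satisfies Re[c(jω)/a(jω)] > 0 for all real ω, and hence for sufficiently small δ > 0, (c(s) + δ(s² + s + 1))/a(s) is strictly positive real. -/

import Mathlib

open Polynomial Complex

noncomputable def evalI (p : Polynomial ℝ) (ω : ℝ) : ℂ :=
  Polynomial.aeval ((ω : ℂ) * Complex.I) p

def HurwitzStable (p : Polynomial ℝ) : Prop :=
  ∀ z : ℂ, Polynomial.aeval z p = 0 → z.re < 0

def SPR (p q : Polynomial ℝ) : Prop :=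
  p.degree = q.degree ∧ HurwitzStable q ∧
    ∀ ω : ℝ, 0 < (evalI p ω / evalI q ω).re

lemma evalI_quad_re (a₁ a₂ ω : ℝ) :
    (evalI (X^2 + C a₁*X + C a₂) ω).re = a₂ - ω^2 := by
  simp [evalI, Complex.ext_iff, mul_pow, I_sq, ← Complex.ofReal_pow]; ring

lemma evalI_quad_im (a₁ a₂ ω : ℝ) :
    (evalI (X^2 + C a₁*X + C a₂) ω).im = a₁*ω := by
  simp [evalI, Complex.ext_iff, mul_pow, I_sq, ← Complex.ofReal_pow]

lemma quad_hurwitz (a₁ a₂ : ℝ) (ha₁ : 0 < a₁) (ha₂ : 0 < a₂) :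
    HurwitzStable (X^2 + C a₁*X + C a₂) := by
  intro z hz
  simp only [map_add, map_mul, map_pow, aeval_X, aeval_C] at hz
  rw [Complex.ext_iff] at hz
  simp only [Complex.add_re, Complex.add_im, Complex.mul_re, Complex.mul_im,
    Complex.ofReal_re, Complex.ofReal_im, Complex.zero_re, Complex.zero_im, pow_two,
    Complex.coe_algebraMap] at hz
  obtain ⟨h1, h2⟩ := hz
  by_contra h
  push_neg at h
  -- h2 : 2*z.re*z.im + a₁*z.im = 0 (in some form), so z.im*(2 z.re + a₁) = 0
  have him : z.im = 0 := by
    by_contra him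
    have : 2*z.re + a₁ > 0 := by linarith
    have : z.im * (2*z.re + a₁) = 0 := by linarith [h2]
    rcases mul_eq_zero.1 this with h' | h'
    · exact him h'
    · linarith
  rw [him] at h1
  nlinarith [sq_nonneg z.re]

lemma re_pos_of (z w : ℂ) (h : 0 < z.re * w.re + z.im * w.im) (hw : 0 < Complex.normSq w) :
    0 < (z / w).re := by
  rw [Complex.div_re, ← add_div]
  exact div_pos h hw

lemma quad_normSq_pos (a₁ a₂ ω : ℝ) (ha₁ : 0 < a₁) (ha₂ : 0 < a₂) :
    0 < Complex.normSq (evalI (X^2 + C a₁*X + C a₂) ω) := by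
  rw [Complex.normSq_apply, evalI_quad_re, evalI_quad_im]
  rcases eq_or_ne ω 0 with h | h
  · subst h; simpa using mul_pos ha₂ ha₂
  · have : 0 < (a₁*ω)*(a₁*ω) := mul_self_pos.mpr (mul_ne_zero (ne_of_gt ha₁) h)
    nlinarith [mul_self_nonneg (a₂ - ω^2)]

theorem quadratic_spr_example (a₁ a₂ x₁ : ℝ)
    (ha₁ : 0 < a₁) (ha₂ : 0 < a₂) (hx₁ : 0 < x₁) (hx : x₁ < a₁) :
    (∀ ω : ℝ,
      0 < (evalI (Polynomial.X + Polynomial.C x₁) ω /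
        evalI (Polynomial.X ^ 2 + Polynomial.C a₁ * Polynomial.X + Polynomial.C a₂) ω).re) ∧
    ∃ δ₀ > (0 : ℝ), ∀ δ : ℝ, 0 < δ → δ < δ₀ →
      SPR (Polynomial.X + Polynomial.C x₁ +
          Polynomial.C δ * (Polynomial.X ^ 2 + Polynomial.X + 1))
        (Polynomial.X ^ 2 + Polynomial.C a₁ * Polynomial.X + Polynomial.C a₂) := by
  constructor
  · intro ω
    apply re_pos_of
    · have hzre : (evalI (X + C x₁) ω).re = x₁ := by simp [evalI]
      have hzim : (evalI (X + C x₁) ω).im = ω := by simp [evalI]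
      rw [hzre, hzim, evalI_quad_re, evalI_quad_im]
      nlinarith [sq_nonneg ω]
    · exact quad_normSq_pos a₁ a₂ ω ha₁ ha₂
  · refine ⟨(a₁ - x₁)/(a₂ + 1), div_pos (by linarith) (by linarith), fun δ hδ hδ' => ?_⟩
    have hkey : δ * (a₂ + 1) < a₁ - x₁ := by
      rw [lt_div_iff₀ (by linarith)] at hδ'
      linarith
    refine ⟨?_, quad_hurwitz a₁ a₂ ha₁ ha₂, ?_⟩
    · have hp : (X + C x₁ + C δ * (X^2 + X + 1) : ℝ[X])
          = C δ * X^2 + C (1+δ) * X + C (x₁+δ) := by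
        simp only [map_add, map_one]
        ring
      have hq : (X^2 + C a₁*X + C a₂ : ℝ[X]) = C 1 * X^2 + C a₁ * X + C a₂ := by
        simp
      rw [hp, hq, Polynomial.degree_quadratic (ne_of_gt hδ),
        Polynomial.degree_quadratic one_ne_zero]
    · intro ω
      apply re_pos_of
      · have hzre : (evalI (X + C x₁ + C δ * (X^2 + X + 1)) ω).re = x₁ + δ - δ*ω^2 := by
          simp [evalI, mul_pow, I_sq, ← Complex.ofReal_pow]; ring
        have hzim : (evalI (X + C x₁ + C δ * (X^2 + X + 1)) ω).im = (1+δ)*ω := by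
          simp [evalI, mul_pow, I_sq, ← Complex.ofReal_pow]; ring
        rw [hzre, hzim, evalI_quad_re, evalI_quad_im]
        nlinarith [mul_nonneg hδ.le (sq_nonneg (ω*ω)),
          mul_nonneg (by nlinarith : (0:ℝ) ≤ a₁ - x₁ - δ*(a₂+1)) (sq_nonneg ω),
          mul_nonneg (mul_pos hδ ha₁).le (sq_nonneg ω),
          mul_pos ha₂ (add_pos hx₁ hδ)]
      · exact quad_normSq_pos a₁ a₂ ω ha₁ ha₂
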